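/- Sandwich for the rescaled Airy approximants: fix β ∈ (1/3,1), δ ∈ (0,1), u ∈ [0,1−δ), and λ_± = 1 ± δ^{-β}n^{-1/3}. On the event E_n(δ) = {Z'_{λ_+}[n]_n ≥ 0 and Z_{λ_−}[n+2n^{2/3}]_n ≤ 0}, for all v ∈ [u, u+δ]: B_{n,−}(v) − B_{n,−}(u) − 2δ^{1−β} ≤ A_n(v) − A_n(u) ≤ B_{n,+}(v) − B_{n,+}(u) + 4δ^{1−β}. -/

import Mathlib

open Set MeasureTheory Filter

/-- An increasing sequence of points of `S` in the rectangle `(p.1,q.1] × (p.2,q.2]`. -/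
def IncrSeq (S : Set (ℝ × ℝ)) (p q : ℝ × ℝ) {k : ℕ} (f : Fin k → ℝ × ℝ) : Prop :=
  (∀ i, f i ∈ S ∧ p.1 < (f i).1 ∧ (f i).1 ≤ q.1 ∧ p.2 < (f i).2 ∧ (f i).2 ≤ q.2) ∧
  ∀ i j : Fin k, i < j → (f i).1 < (f j).1 ∧ (f i).2 < (f j).2

/-- Last-passage time: maximal length of an increasing sequence of points of `S`
in the rectangle determined by `p ≤ q`. -/
noncomputable def lpp (S : Set (ℝ × ℝ)) (p q : ℝ × ℝ) : ℕ :=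
  sSup {k : ℕ | ∃ f : Fin k → ℝ × ℝ, IncrSeq S p q f}

/-- Last-passage time with boundary counting function `ν` on the `x`-axis:
`L_ν[x]_t = sup_{z ≤ x} (ν z + L((z,0),(x,t)))`. -/
noncomputable def Lb (S : Set (ℝ × ℝ)) (ν : ℝ → ℝ) (x t : ℝ) : ℝ :=
  sSup {v : ℝ | ∃ z ≤ x, v = ν z + (lpp S (z, 0) (x, t) : ℝ)}

/-- Rightmost exit point. -/
noncomputable def Zright (S : Set (ℝ × ℝ)) (ν : ℝ → ℝ) (x t : ℝ) : ℝ :=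
  sSup {z : ℝ | z ≤ x ∧ Lb S ν x t = ν z + (lpp S (z, 0) (x, t) : ℝ)}

/-- Leftmost exit point. -/
noncomputable def Zleft (S : Set (ℝ × ℝ)) (ν : ℝ → ℝ) (x t : ℝ) : ℝ :=
  sInf {z : ℝ | z ≤ x ∧ Lb S ν x t = ν z + (lpp S (z, 0) (x, t) : ℝ)}

/-- The rescaled Hammersley profile
`A_n(u) = (L[n+2un^{2/3}]_n − (2n+2un^{2/3}) + u²n^{1/3}) / n^{1/3}`. -/
noncomputable def AiryApprox (S : Set (ℝ × ℝ)) (n : ℕ) (u : ℝ) : ℝ :=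
  ((lpp S (0, 0) ((n:ℝ) + 2*u*(n:ℝ) ^ ((2:ℝ)/3), (n:ℝ)) : ℝ)
      - (2*(n:ℝ) + 2*u*(n:ℝ) ^ ((2:ℝ)/3)) + u ^ 2 * (n:ℝ) ^ ((1:ℝ)/3))
    / (n:ℝ) ^ ((1:ℝ)/3)

/-- The rescaled equilibrium profile
`B_{n,λ}(u) = (L_λ[n+2un^{2/3}]_n − L_λ[n]_n − 2λun^{2/3}) / n^{1/3}`. -/
noncomputable def EqApprox (S : Set (ℝ × ℝ)) (ν : ℝ → ℝ) (lam : ℝ) (n : ℕ) (u : ℝ) : ℝ :=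
  (Lb S ν ((n:ℝ) + 2*u*(n:ℝ) ^ ((2:ℝ)/3)) (n:ℝ) - Lb S ν (n:ℝ) (n:ℝ)
      - lam * (2*u*(n:ℝ) ^ ((2:ℝ)/3)))
    / (n:ℝ) ^ ((1:ℝ)/3)

/-- **Sandwich for the rescaled Airy approximants.** With `λ_± = 1 ± δ^{-β}n^{-1/3}`
and boundary processes `ν₊, ν₋` of intensities `λ_+, λ_-`, on the event
`E_n(δ) = {Z'_{λ_+}[n]_n ≥ 0 and Z_{λ_−}[n+2n^{2/3}]_n ≤ 0}`, for all `v ∈ [u, u+δ]`: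
`B_{n,−}(v) − B_{n,−}(u) − 2δ^{1−β} ≤ A_n(v) − A_n(u) ≤ B_{n,+}(v) − B_{n,+}(u) + 4δ^{1−β}`. -/
theorem airy_sandwich (S : Set (ℝ × ℝ)) (νp νm : ℝ → ℝ) (n : ℕ) (hn : 1 ≤ n)
    (β δ u : ℝ) (hβ : β ∈ Set.Ioo (1/3 : ℝ) 1) (hδ : δ ∈ Set.Ioo (0:ℝ) 1)
    (hu : u ∈ Set.Ico (0:ℝ) (1 - δ))
    -- local comparison (Lemma 2.1) for the boundary process of intensity `λ_+`
    (hcomp_p : ∀ x y : ℝ, 0 ≤ x → x ≤ y → 0 ≤ Zleft S νp x (n:ℝ) →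
      (lpp S (0, 0) (y, (n:ℝ)) : ℝ) - (lpp S (0, 0) (x, (n:ℝ)) : ℝ)
        ≤ Lb S νp y (n:ℝ) - Lb S νp x (n:ℝ))
    -- local comparison for the boundary process of intensity `λ_-`
    (hcomp_m : ∀ x y : ℝ, 0 ≤ x → x ≤ y → Zright S νm y (n:ℝ) ≤ 0 →
      Lb S νm y (n:ℝ) - Lb S νm x (n:ℝ)
        ≤ (lpp S (0, 0) (y, (n:ℝ)) : ℝ) - (lpp S (0, 0) (x, (n:ℝ)) : ℝ))
    -- monotonicity of exit points in `x`
    (hmono_p : Monotone (fun x => Zleft S νp x (n:ℝ)))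
    (hmono_m : Monotone (fun x => Zright S νm x (n:ℝ)))
    -- the event `E_n(δ)`
    (hE1 : 0 ≤ Zleft S νp (n:ℝ) (n:ℝ))
    (hE2 : Zright S νm ((n:ℝ) + 2*(n:ℝ) ^ ((2:ℝ)/3)) (n:ℝ) ≤ 0) :
    ∀ v ∈ Set.Icc u (u + δ),
      EqApprox S νm (1 - δ ^ (-β) / (n:ℝ) ^ ((1:ℝ)/3)) n v
          - EqApprox S νm (1 - δ ^ (-β) / (n:ℝ) ^ ((1:ℝ)/3)) n u - 2 * δ ^ (1 - β)
        ≤ AiryApprox S n v - AiryApprox S n u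
      ∧ AiryApprox S n v - AiryApprox S n u
        ≤ EqApprox S νp (1 + δ ^ (-β) / (n:ℝ) ^ ((1:ℝ)/3)) n v
          - EqApprox S νp (1 + δ ^ (-β) / (n:ℝ) ^ ((1:ℝ)/3)) n u + 4 * δ ^ (1 - β) := by
  intro v hv
  obtain ⟨hδ0, hδ1⟩ := hδ
  obtain ⟨hu0, hu1⟩ := hu
  obtain ⟨huv, hvd⟩ := hv
  have hn0 : (0:ℝ) < n := by exact_mod_cast Nat.lt_of_lt_of_le Nat.zero_lt_one hn
  simp only [AiryApprox, EqApprox]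
  set t3 : ℝ := (n:ℝ) ^ ((1:ℝ)/3) with ht3def
  set t2 : ℝ := (n:ℝ) ^ ((2:ℝ)/3) with ht2def
  have ht3 : 0 < t3 := Real.rpow_pos_of_pos hn0 _
  have ht2 : 0 < t2 := Real.rpow_pos_of_pos hn0 _
  have ht23 : t2 = t3 * t3 := by
    rw [ht2def, ht3def, ← Real.rpow_add hn0]; norm_num
  set Q : ℝ := δ ^ (-β) with hQdef
  set P : ℝ := δ ^ (1 - β) with hPdef
  have hQ0 : 0 < Q := Real.rpow_pos_of_pos hδ0 _
  have hP : P = δ * Q := by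
    rw [hPdef, hQdef, show (1 - β) = 1 + (-β) by ring, Real.rpow_add hδ0, Real.rpow_one]
  have hδP : δ ≤ P := by
    have := Real.rpow_le_rpow_of_exponent_ge hδ0 (le_of_lt hδ1)
      (show 1 - β ≤ 1 by linarith [hβ.1, hβ.2])
    rwa [Real.rpow_one] at this
  -- the two abscissas
  have hx0 : (0:ℝ) ≤ (n:ℝ) + 2*u*t2 := by positivity
  have hx01 : (n:ℝ) + 2*u*t2 ≤ (n:ℝ) + 2*v*t2 := by nlinarith
  have hx0n : (n:ℝ) ≤ (n:ℝ) + 2*u*t2 := by nlinarith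
  have hx1n : (n:ℝ) + 2*v*t2 ≤ (n:ℝ) + 2*t2 := by nlinarith
  have hZp : 0 ≤ Zleft S νp ((n:ℝ) + 2*u*t2) (n:ℝ) := le_trans hE1 (hmono_p hx0n)
  have hZm : Zright S νm ((n:ℝ) + 2*v*t2) (n:ℝ) ≤ 0 := le_trans (hmono_m hx1n) hE2
  have hLp := hcomp_p ((n:ℝ) + 2*u*t2) ((n:ℝ) + 2*v*t2) hx0 hx01 hZp
  have hLm := hcomp_m ((n:ℝ) + 2*u*t2) ((n:ℝ) + 2*v*t2) hx0 hx01 hZm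
  -- scalar bounds
  have h1 : Q * (v - u) ≤ P := by
    calc Q * (v - u) ≤ Q * δ := by
          apply mul_le_mul_of_nonneg_left (by linarith) hQ0.le
      _ = P := by rw [hP]; ring
  have h2 : v ^ 2 - u ^ 2 ≤ 2 * δ := by
    have hvu : v - u ≤ δ := by linarith
    have hvu0 : 0 ≤ v - u := by linarith
    have hsum : v + u ≤ 2 := by linarith
    have : (v - u) * (v + u) ≤ δ * 2 :=
      mul_le_mul hvu hsum (by linarith) hδ0.le
    have heq : v ^ 2 - u ^ 2 = (v - u) * (v + u) := by ring
    linarith [this]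
  have h3 : 0 ≤ v ^ 2 - u ^ 2 := sub_nonneg.mpr (pow_le_pow_left₀ hu0 huv 2)
  have h1t := mul_le_mul_of_nonneg_right h1 ht3.le
  have h2t := mul_le_mul_of_nonneg_right h2 ht3.le
  have h3t := mul_nonneg h3 ht3.le
  have hδPt := mul_le_mul_of_nonneg_right hδP ht3.le
  have hev : (1 + Q/t3) * (2*v*t2) = 2*v*t2 + 2*Q*v*t3 := by
    rw [ht23]; field_simp
  have heu : (1 + Q/t3) * (2*u*t2) = 2*u*t2 + 2*Q*u*t3 := by
    rw [ht23]; field_simp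
  have hev' : (1 - Q/t3) * (2*v*t2) = 2*v*t2 - 2*Q*v*t3 := by
    rw [ht23]; field_simp
  have heu' : (1 - Q/t3) * (2*u*t2) = 2*u*t2 - 2*Q*u*t3 := by
    rw [ht23]; field_simp
  constructor
  · rw [sub_le_iff_le_add, div_sub_div_same, div_sub_div_same,
      ← sub_le_iff_le_add', div_sub_div_same, div_le_iff₀ ht3]
    rw [hev', heu']
    linarith [h1t, h3t, hLm]
  · rw [div_sub_div_same, div_sub_div_same,
      show (4:ℝ) * P = 4 * P * t3 / t3 by field_simp, ← add_div]
    rw [div_le_div_iff_of_pos_right ht3, hev, heu]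
    linarith [h1t, h2t, hδPt, hLp]
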